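/- Let H : ℝ → Matrix n n ℂ be continuous and suppose H commutes with itself at different times, i.e. H(s) · H(s') = H(s') · H(s) for all real s, s'. Define U(t) := exp(−i · ∫_0^t H(s) ds), where exp is the matrix exponential. Then U solves the Schrödinger equation: for every real t, the map U has derivative at t equal to (−i) • (H(t) · U(t)), i.e. HasDerivAt U ((−i) • (H(t) · U(t))) t. In particular, for Hamiltonians commuting at different times the time-ordered exponential coincides with the ordinary exponential of the integral. -/

import Mathlib

open NormedSpace

section AuxLinfty

attribute [local instance] Matrix.linftyOpNormedRing Matrix.linftyOpNormedAlgebra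

set_option maxHeartbeats 1000000 in
/-- Auxiliary: with the `L∞`-operator norm (a normed-algebra norm), the derivative of
`exp ∘ A` for a path `A` with pairwise-commuting values, phrased via slopes so that the
statement only depends on the topology. -/
theorem exp_comm_slope_aux {n : Type*} [Fintype n] [DecidableEq n]
    (A : ℝ → Matrix n n ℂ) (A' : Matrix n n ℂ) (t : ℝ)
    (hA : Filter.Tendsto (slope A t) (nhdsWithin t {t}ᶜ) (nhds A'))
    (hAcomm : ∀ u v : ℝ, Commute (A u) (A v)) :
    Filter.Tendsto (slope (fun u => exp (A u)) t) (nhdsWithin t {t}ᶜ)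
      (nhds (A' * exp (A t))) := by
  replace hA := hasDerivAt_iff_tendsto_slope.mpr hA
  refine hasDerivAt_iff_tendsto_slope.mp ?_
  have hB' : HasDerivAt (fun u => A u - A t) A' t := by
    exact hA.sub_const (A t)
  have hBt : A t - A t = 0 := sub_self _
  have hexp0 : HasFDerivAt (exp) (1 : Matrix n n ℂ →L[ℂ] Matrix n n ℂ) 0 :=
    hasFDerivAt_exp_zero
  have hexp0' : HasFDerivAt (exp)
      ((1 : Matrix n n ℂ →L[ℂ] Matrix n n ℂ).restrictScalars ℝ) ((fun u => A u - A t) t) := by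
    simp only [hBt]
    exact hexp0.restrictScalars ℝ
  have hcomp : HasDerivAt (fun u => exp (A u - A t)) A' t := by
    have := hexp0'.comp_hasDerivAt t hB'
    exact this
  have hmul : HasDerivAt (fun u => exp (A u - A t) * exp (A t))
      (A' * exp (A t)) t := hcomp.mul_const _
  have hfun : (fun u => exp (A u - A t) * exp (A t)) = fun u => exp (A u) := by
    funext u
    erw [← exp_add_of_commute ((hAcomm u t).sub_left (hAcomm t t))]
    rw [sub_add_cancel]
    rfl
  rwa [hfun] at hmul

end AuxLinfty

attribute [local instance] Matrix.normedAddCommGroup Matrix.normedSpace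

set_option maxHeartbeats 1000000 in
/-- For a continuous time-dependent Hamiltonian commuting with itself at different times,
`U(t) = exp(-i ∫_0^t H(s) ds)` solves the Schrödinger equation
`∂U(t)/∂t = -i H(t) U(t)`. -/
theorem exp_neg_I_integral_hasDerivAt
    {n : Type*} [Fintype n] [DecidableEq n]
    (H : ℝ → Matrix n n ℂ) (hcont : Continuous H)
    (hcomm : ∀ s s' : ℝ, H s * H s' = H s' * H s) :
    ∀ t : ℝ,
      HasDerivAt (fun t : ℝ => exp ((-Complex.I) • ∫ s in (0 : ℝ)..t, H s))
        ((-Complex.I) • (H t * exp ((-Complex.I) • ∫ s in (0 : ℝ)..t, H s))) t := by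
  intro t
  set A : ℝ → Matrix n n ℂ := fun u => (-Complex.I) • ∫ s in (0 : ℝ)..u, H s with hA
  have hint : ∀ a b : ℝ,
      @IntervalIntegrable _ PseudoMetricSpace.toUniformSpace.toTopologicalSpace _ H MeasureTheory.volume a b :=
    fun a b => (hcont.intervalIntegrable a b)
  -- H s commutes with any integral of H
  have hHint : ∀ (s : ℝ) (a b : ℝ),
      H s * (∫ u in a..b, H u) = (∫ u in a..b, H u) * H s := by
    intro s a b
    have h1 := (LinearMap.mulLeft ℂ (H s)).toContinuousLinearMap.intervalIntegral_comp_comm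
      (hint a b)
    have h2 := (LinearMap.mulRight ℂ (H s)).toContinuousLinearMap.intervalIntegral_comp_comm
      (hint a b)
    erw [LinearMap.coe_toContinuousLinearMap'] at h1 h2
    simp only [LinearMap.coe_toContinuousLinearMap', LinearMap.mulLeft_apply,
      LinearMap.mulRight_apply] at h1 h2
    rw [← h1, ← h2]
    exact intervalIntegral.integral_congr fun u _ => hcomm s u
  -- integrals commute with each other
  have hII : ∀ a b c d : ℝ, Commute (∫ u in a..b, H u) (∫ u in c..d, H u) := by
    intro a b c d
    let M := ∫ u in c..d, H u
    have h1 := (LinearMap.mulRight ℂ M).toContinuousLinearMap.intervalIntegral_comp_comm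
      (hint a b)
    have h2 := (LinearMap.mulLeft ℂ M).toContinuousLinearMap.intervalIntegral_comp_comm
      (hint a b)
    erw [LinearMap.coe_toContinuousLinearMap'] at h1 h2
    simp only [LinearMap.coe_toContinuousLinearMap', LinearMap.mulLeft_apply,
      LinearMap.mulRight_apply] at h1 h2
    show (∫ u in a..b, H u) * M = M * (∫ u in a..b, H u)
    rw [← h1, ← h2]
    exact intervalIntegral.integral_congr fun v _ => hHint v c d
  have hAcomm : ∀ u v : ℝ, Commute (A u) (A v) := by
    intro u v
    exact ((hII 0 u 0 v).smul_left _).smul_right _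
  -- derivative of A
  have hA' : HasDerivAt A ((-Complex.I) • H t) t := by
    have hcont' : @Continuous _ _ _ PseudoMetricSpace.toUniformSpace.toTopologicalSpace H := hcont
    have h := intervalIntegral.integral_hasDerivAt_right (hint 0 t)
      (hcont'.stronglyMeasurable.stronglyMeasurableAtFilter) hcont'.continuousAt
    exact h.const_smul (-Complex.I)
  replace hA' := hasDerivAt_iff_tendsto_slope.mp hA'
  have key := exp_comm_slope_aux A ((-Complex.I) • H t) t hA' hAcomm
  replace key := hasDerivAt_iff_tendsto_slope.mpr key
  have : ((-Complex.I) • H t) * exp (A t) = (-Complex.I) • (H t * exp (A t)) :=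
    Matrix.smul_mul _ _ _
  rwa [this] at key
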